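/- (Theorem 6(i), global convergence of the inexact fair primal dual method, Condat–Vũ case.) Let E be a finite-dimensional real inner product space (E = ℝⁿ), f₁ : E → ℝ convex and differentiable with L-Lipschitz continuous gradient (L > 0), h : E → ℝ and φ : E → ℝ convex, σ, τ > 0 with στ < 1 − σL, and let (ε_k)_{k≥1} be a nonnegative summable sequence. Given x⁰, y⁰ ∈ E, define for k ≥ 0: x̂ᵏ⁺¹ minimizes x ↦ h(x) + (1/(2σ))‖x − (xᵏ − σ(yᵏ + ∇f₁(xᵏ)))‖²; yᵏ⁺¹ minimizes y ↦ φ(y) + (1/(2τ))‖y − (yᵏ + τ(2x̂ᵏ⁺¹ − xᵏ)) − dᵏ⁺¹‖² where the error vectors satisfy ‖dᵏ⁺¹‖ ≤ ε_{k+1} / max{1, ‖yᵏ⁺¹‖}; and xᵏ⁺¹ := x̂ᵏ⁺¹. Assume L(x,y) = f₁(x) + h(x) + ⟨x,y⟩ − φ(y) admits at least one saddle point. Then there exists a saddle point (x*, y*) of L such that (xᵏ, yᵏ) converges to (x*, y*) as k → ∞. -/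

import Mathlib

set_option maxHeartbeats 1000000


open RealInnerProductSpace

section AuxLemmas

open Filter Topology

variable {E : Type*} [NormedAddCommGroup E] [InnerProductSpace ℝ E]

/-- Subgradient inequality from prox minimality. -/
lemma prox_subgrad' {g : E → ℝ} (hg : ConvexOn ℝ Set.univ g) {c : ℝ} (hc : 0 < c)
    {u a : E} (hmin : ∀ z, g u + c * ‖u - a‖ ^ 2 ≤ g z + c * ‖z - a‖ ^ 2) (z : E) :
    g u + 2 * c * ⟪a - u, z - u⟫ ≤ g z := by
  set B : ℝ := ‖z - u‖ ^ 2 with hB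
  have hBnn : 0 ≤ B := by positivity
  have key : ∀ t : ℝ, 0 < t → t ≤ 1 →
      0 ≤ (g z - g u - 2 * c * ⟪a - u, z - u⟫) + c * t * B := by
    intro t ht ht1
    have hmem := hmin ((1 - t) • u + t • z)
    have hcvx := hg.2 (Set.mem_univ u) (Set.mem_univ z) (by linarith : (0:ℝ) ≤ 1 - t)
      (le_of_lt ht) (by ring)
    simp only [smul_eq_mul] at hcvx
    have hexp : ‖(1 - t) • u + t • z - a‖ ^ 2
        = ‖u - a‖ ^ 2 + 2 * t * ⟪u - a, z - u⟫ + t ^ 2 * B := by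
      have : (1 - t) • u + t • z - a = (u - a) + t • (z - u) := by
        module
      rw [this, @norm_add_sq_real, real_inner_smul_right, norm_smul]
      rw [Real.norm_eq_abs, abs_of_pos ht]
      ring
    have h2 : g u + c * ‖u - a‖ ^ 2 ≤ (1 - t) * g u + t * g z
        + c * (‖u - a‖ ^ 2 + 2 * t * ⟪u - a, z - u⟫ + t ^ 2 * B) := by
      calc g u + c * ‖u - a‖ ^ 2 ≤ g ((1 - t) • u + t • z)
            + c * ‖(1 - t) • u + t • z - a‖ ^ 2 := hmem
        _ ≤ _ := by rw [hexp]; linarith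
    have hinner : ⟪u - a, z - u⟫ = - ⟪a - u, z - u⟫ := by
      rw [← inner_neg_left]; congr 1; abel
    rw [hinner] at h2
    have h3 : 0 ≤ t * ((g z - g u - 2 * c * ⟪a - u, z - u⟫) + c * t * B) := by nlinarith
    exact nonneg_of_mul_nonneg_right h3 ht
  by_contra hcon
  push_neg at hcon
  set A : ℝ := g z - g u - 2 * c * ⟪a - u, z - u⟫ with hA
  have hAneg : A < 0 := by linarith
  rcases eq_or_lt_of_le hBnn with hB0 | hBpos
  · have := key 1 one_pos le_rfl; rw [← hB0] at this; linarith
  · have htpos : 0 < -A / (2 * c * B) := div_pos (by linarith) (by nlinarith)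
    set t := min 1 (-A / (2 * c * B)) with htdef
    have ht : 0 < t := lt_min one_pos htpos
    have ht1 : t ≤ 1 := min_le_left _ _
    have hk := key t ht ht1
    have htle : t ≤ -A / (2 * c * B) := min_le_right _ _
    rw [le_div_iff₀ (by nlinarith : (0:ℝ) < 2 * c * B)] at htle
    nlinarith

variable [CompleteSpace E]

lemma line_hasDerivAt' (f : E → ℝ) (f' : E → E) (hdiff : ∀ p, HasGradientAt f (f' p) p)
    (u w : E) (t : ℝ) :
    HasDerivAt (fun s : ℝ => f (u + s • w)) ⟪f' (u + t • w), w⟫ t := by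
  have hline : HasDerivAt (fun s : ℝ => u + s • w) w t := by
    simpa using ((hasDerivAt_id t).smul_const w).const_add u
  have hf := (hdiff (u + t • w)).hasFDerivAt
  have := hf.comp_hasDerivAt t hline
  simpa [InnerProductSpace.toDual_apply_apply, Function.comp_def] using this

/-- Gradient inequality for convex functions. -/
lemma grad_convex_ineq' {f : E → ℝ} {f' : E → E} (hconv : ConvexOn ℝ Set.univ f)
    (hdiff : ∀ p, HasGradientAt f (f' p) p) (u v : E) :
    f u + ⟪f' u, v - u⟫ ≤ f v := by
  have hg := line_hasDerivAt' f f' hdiff u (v - u) 0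
  rw [hasDerivAt_iff_tendsto_slope] at hg
  simp only [zero_smul, add_zero] at hg
  have hslope : ∀ t ∈ Set.Ioo (0:ℝ) 1,
      slope (fun s : ℝ => f (u + s • (v - u))) 0 t ≤ f v - f u := by
    intro t ht
    have hcvx := hconv.2 (Set.mem_univ u) (Set.mem_univ v)
      (by linarith [ht.2] : (0:ℝ) ≤ 1 - t) (le_of_lt ht.1) (by ring)
    simp only [smul_eq_mul] at hcvx
    have harg : (1 - t) • u + t • v = u + t • (v - u) := by module
    rw [harg] at hcvx
    rw [slope_def_field]
    simp only [zero_smul, add_zero, sub_zero]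
    rw [div_le_iff₀ ht.1]
    nlinarith [ht.1]
  have hle : ∀ᶠ t in 𝓝[>] (0:ℝ),
      slope (fun s : ℝ => f (u + s • (v - u))) 0 t ≤ f v - f u := by
    filter_upwards [Ioo_mem_nhdsGT_of_mem (by norm_num : (0:ℝ) ∈ Set.Ico 0 1)] with t ht
    exact hslope t ht
  have hg' : Tendsto (slope (fun s : ℝ => f (u + s • (v - u))) 0) (𝓝[>] 0)
      (𝓝 ⟪f' u, v - u⟫) := hg.mono_left (nhdsWithin_mono _ (by intro t ht; simpa using ne_of_gt ht))
  have := le_of_tendsto hg' hle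
  linarith

/-- Descent lemma. -/
lemma descent_lemma' {f : E → ℝ} {f' : E → E} {L : ℝ}
    (hdiff : ∀ p, HasGradientAt f (f' p) p)
    (hlip : ∀ p q, ‖f' p - f' q‖ ≤ L * ‖p - q‖) (u v : E) :
    f v ≤ f u + ⟪f' u, v - u⟫ + L / 2 * ‖v - u‖ ^ 2 := by
  set w := v - u with hw
  set ψ : ℝ → ℝ := fun t => f (u + t • w) - t * ⟪f' u, w⟫ - L * t ^ 2 / 2 * ‖w‖ ^ 2 with hψ
  have hd : ∀ t : ℝ, HasDerivAt ψ
      (⟪f' (u + t • w), w⟫ - ⟪f' u, w⟫ - L * t * ‖w‖ ^ 2) t := by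
    intro t
    have h1 := line_hasDerivAt' f f' hdiff u w t
    have h2 : HasDerivAt (fun t : ℝ => t * ⟪f' u, w⟫) ⟪f' u, w⟫ t := by
      simpa using (hasDerivAt_id t).mul_const ⟪f' u, w⟫
    have h3 : HasDerivAt (fun t : ℝ => L * t ^ 2 / 2 * ‖w‖ ^ 2) (L * t * ‖w‖ ^ 2) t := by
      have : HasDerivAt (fun t : ℝ => t ^ 2) (2 * t) t := by
        simpa using hasDerivAt_pow 2 t
      have := ((this.const_mul L).div_const 2).mul_const (‖w‖ ^ 2)
      exact this.congr_deriv (by ring)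
    exact (h1.sub h2).sub h3
  have hanti : AntitoneOn ψ (Set.Icc 0 1) := by
    have hdiffψ : Differentiable ℝ ψ := fun t => (hd t).differentiableAt
    apply antitoneOn_of_deriv_nonpos (convex_Icc 0 1)
    · exact hdiffψ.continuous.continuousOn
    · exact fun t _ => (hdiffψ t).differentiableWithinAt
    · intro t ht
      rw [interior_Icc] at ht
      rw [(hd t).deriv]
      have hib : ⟪f' (u + t • w) - f' u, w⟫ ≤ ‖f' (u + t • w) - f' u‖ * ‖w‖ :=
        real_inner_le_norm _ _
      have hlb : ‖f' (u + t • w) - f' u‖ ≤ L * (t * ‖w‖) := by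
        have := hlip (u + t • w) u
        simpa [norm_smul, Real.norm_eq_abs, abs_of_pos ht.1] using this
      have : ⟪f' (u + t • w), w⟫ - ⟪f' u, w⟫ = ⟪f' (u + t • w) - f' u, w⟫ := by
        rw [inner_sub_left]
      rw [this]
      nlinarith [norm_nonneg w, norm_nonneg (f' (u + t • w) - f' u), ht.1.le]
  have h01 := hanti (Set.left_mem_Icc.mpr zero_le_one) (Set.right_mem_Icc.mpr zero_le_one)
    zero_le_one
  simp only [hψ, zero_smul, add_zero, one_smul, zero_pow, one_pow, zero_mul, mul_zero,
    sub_zero, zero_div, mul_one] at h01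
  have : u + w = v := by rw [hw]; abel
  rw [this] at h01
  linarith

end AuxLemmas

section AuxLemmas2

open Filter Topology

variable {E : Type*} [NormedAddCommGroup E] [InnerProductSpace ℝ E]

/-- positive-definiteness of the Condat–Vũ quadratic form. -/
lemma quad_lower' {q τ : ℝ} (hτ : 0 < τ) (hlt : τ < q) :
    ∃ δ > (0:ℝ), ∀ a b : E,
      δ * (‖a‖ ^ 2 + ‖b‖ ^ 2) ≤ q / 2 * ‖a‖ ^ 2 + 1 / (2 * τ) * ‖b‖ ^ 2 - ⟪a, b⟫ := by
  set s : ℝ := (τ + q) / 2 with hs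
  have hspos : 0 < s := by simp only [hs]; linarith
  have hsτ : τ < s := by simp only [hs]; linarith
  have hsq : s < q := by simp only [hs]; linarith
  refine ⟨min ((q - s) / 2) ((s - τ) / (2 * s * τ)), lt_min (by linarith)
    (div_pos (by linarith) (by positivity)), fun a b => ?_⟩
  have hip : ⟪a, b⟫ ≤ ‖a‖ * ‖b‖ := real_inner_le_norm a b
  have hamgm : ‖a‖ * ‖b‖ ≤ s / 2 * ‖a‖ ^ 2 + 1 / (2 * s) * ‖b‖ ^ 2 := by
    rw [← sub_nonneg]
    have heq : s / 2 * ‖a‖ ^ 2 + 1 / (2 * s) * ‖b‖ ^ 2 - ‖a‖ * ‖b‖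
        = (s * ‖a‖ - ‖b‖) ^ 2 / (2 * s) := by
      field_simp; ring
    rw [heq]; positivity
  have h1 : min ((q - s) / 2) ((s - τ) / (2 * s * τ)) ≤ (q - s) / 2 := min_le_left _ _
  have h2 : min ((q - s) / 2) ((s - τ) / (2 * s * τ)) ≤ (s - τ) / (2 * s * τ) :=
    min_le_right _ _
  have hkey : 1 / (2 * τ) - 1 / (2 * s) = (s - τ) / (2 * s * τ) := by
    field_simp
  have hb2 : (s - τ) / (2 * s * τ) * ‖b‖ ^ 2 ≤ (1 / (2 * τ) - 1 / (2 * s)) * ‖b‖ ^ 2 := by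
    rw [hkey]
  nlinarith [sq_nonneg (‖a‖), sq_nonneg (‖b‖), mul_le_mul_of_nonneg_right h2
    (sq_nonneg (‖b‖ : ℝ)), mul_le_mul_of_nonneg_right h1 (sq_nonneg (‖a‖ : ℝ))]

/-- quasi-Fejér monotone sequences converge. -/
lemma quasi_fejer' {a w η : ℕ → ℝ} (ha : ∀ k, 0 ≤ a k) (hw : ∀ k, 0 ≤ w k)
    (hη0 : ∀ k, 0 ≤ η k) (hη : Summable η)
    (hrec : ∀ k, a (k + 1) + w k ≤ a k + η k) :
    (∃ l, Tendsto a atTop (𝓝 l)) ∧ Summable w ∧ ∀ k, a k ≤ a 0 + ∑' j, η j := by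
  set t : ℕ → ℝ := fun k => ∑ j ∈ Finset.range k, η j with ht
  have htmono : ∀ k, t k ≤ ∑' j, η j := fun k => Summable.sum_le_tsum _ (fun j _ => hη0 j) hη
  have htend : Tendsto t atTop (𝓝 (∑' j, η j)) := hη.hasSum.tendsto_sum_nat
  have hbk : ∀ k, a k - t k ≤ a 0 := by
    intro k
    induction k with
    | zero => simp [ht]
    | succ n ih =>
      have := hrec n
      have hts : t (n + 1) = t n + η n := Finset.sum_range_succ _ _
      have := hw n
      linarith
  have hanti : Antitone fun k => a k - t k := by
    apply antitone_nat_of_succ_le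
    intro n
    have := hrec n
    have hts : t (n + 1) = t n + η n := Finset.sum_range_succ _ _
    have := hw n
    linarith
  have hbdd : BddBelow (Set.range fun k => a k - t k) := by
    refine ⟨-(∑' j, η j), ?_⟩
    rintro _ ⟨k, rfl⟩
    have := ha k
    have := htmono k
    dsimp only
    linarith
  have hconv : Tendsto (fun k => a k - t k) atTop (𝓝 (⨅ k, (a k - t k))) :=
    tendsto_atTop_ciInf hanti hbdd
  constructor
  · exact ⟨(⨅ k, (a k - t k)) + ∑' j, η j, by
      have := hconv.add htend
      simpa using this⟩
  constructor
  · apply summable_of_sum_range_le (c := a 0 + ∑' j, η j) hw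
    intro n
    have hsum : ∀ n, a n + ∑ j ∈ Finset.range n, w j ≤ a 0 + t n := by
      intro n
      induction n with
      | zero => simp [ht]
      | succ m ih =>
        have h1 := hrec m
        have hts : t (m + 1) = t m + η m := Finset.sum_range_succ _ _
        have hws : ∑ j ∈ Finset.range (m + 1), w j
            = ∑ j ∈ Finset.range m, w j + w m := Finset.sum_range_succ _ _
        linarith
    have := hsum n
    have := ha n
    have := htmono n
    linarith
  · intro k
    have := hbk k
    have := htmono k
    linarith

lemma core_identity' (σ τ L : ℝ) (hσ : σ ≠ 0) (hτ : τ ≠ 0) (u uk vp vk e : E) :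
    (1 / (2 * σ) * ‖uk‖ ^ 2 + 1 / (2 * τ) * ‖vk‖ ^ 2 - ⟪uk, vk⟫ + 1 / τ * ⟪e, vp⟫)
      - (1 / (2 * σ) * ‖u‖ ^ 2 + 1 / (2 * τ) * ‖vp‖ ^ 2 - ⟪u, vp⟫)
      - ((1 / σ - L) / 2 * ‖u - uk‖ ^ 2 + 1 / (2 * τ) * ‖vp - vk‖ ^ 2 - ⟪u - uk, vp - vk⟫)
    = (1 / σ * ⟪uk - u, u⟫ - ⟪u, vk⟫ + L / 2 * ‖u - uk‖ ^ 2)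
      + (1 / τ * ⟪vk - vp, vp⟫ + (⟪u, vp⟫ + ⟪u - uk, vp⟫) + 1 / τ * ⟪e, vp⟫) := by
  have h1 : ‖u - uk‖ ^ 2 = ‖u‖ ^ 2 - 2 * ⟪u, uk⟫ + ‖uk‖ ^ 2 := norm_sub_sq_real u uk
  have h2 : ‖vp - vk‖ ^ 2 = ‖vp‖ ^ 2 - 2 * ⟪vp, vk⟫ + ‖vk‖ ^ 2 := norm_sub_sq_real vp vk
  have h3 : ⟪u - uk, vp - vk⟫ = ⟪u, vp⟫ - ⟪u, vk⟫ - ⟪uk, vp⟫ + ⟪uk, vk⟫ := by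
    simp [inner_sub_left, inner_sub_right]; ring
  have h4 : ⟪uk - u, u⟫ = ⟪u, uk⟫ - ‖u‖ ^ 2 := by
    rw [inner_sub_left, real_inner_comm uk u, real_inner_self_eq_norm_sq]
  have h5 : ⟪vk - vp, vp⟫ = ⟪vp, vk⟫ - ‖vp‖ ^ 2 := by
    rw [inner_sub_left, real_inner_comm vk vp, real_inner_self_eq_norm_sq]
  have h6 : ⟪u - uk, vp⟫ = ⟪u, vp⟫ - ⟪uk, vp⟫ := inner_sub_left u uk vp
  rw [h3, h4, h5, h6, h1, h2]
  field_simp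
  ring

lemma onestep' {σ τ L : ℝ} (hσ : 0 < σ) (hτ : 0 < τ)
    (f h φ : E → ℝ) (xs ys xk xp yk yp g e : E)
    (hP : h xp + 1 / σ * ⟪xk - σ • (yk + g) - xp, xs - xp⟫ ≤ h xs)
    (hD : φ yp + 1 / τ * ⟪yk + τ • ((2:ℕ) • xp - xk) + e - yp, ys - yp⟫ ≤ φ ys)
    (hS1 : ⟪xs, yp⟫ - φ yp ≤ ⟪xs, ys⟫ - φ ys)
    (hS2 : f xs + h xs + ⟪xs, ys⟫ ≤ f xp + h xp + ⟪xp, ys⟫)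
    (hC : f xk + ⟪g, xs - xk⟫ ≤ f xs)
    (hDe : f xp ≤ f xk + ⟪g, xp - xk⟫ + L / 2 * ‖xp - xk‖ ^ 2) :
    1 / (2 * σ) * ‖xp - xs‖ ^ 2 + 1 / (2 * τ) * ‖yp - ys‖ ^ 2 - ⟪xp - xs, yp - ys⟫
      + ((1 / σ - L) / 2 * ‖xp - xk‖ ^ 2 + 1 / (2 * τ) * ‖yp - yk‖ ^ 2
          - ⟪xp - xk, yp - yk⟫)
    ≤ 1 / (2 * σ) * ‖xk - xs‖ ^ 2 + 1 / (2 * τ) * ‖yk - ys‖ ^ 2 - ⟪xk - xs, yk - ys⟫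
      + 1 / τ * ⟪e, yp - ys⟫ := by
  set u := xp - xs with hu
  set uk := xk - xs with huk
  set vp := yp - ys with hvp
  set vk := yk - ys with hvk
  have e1 : xp - xk = u - uk := by rw [hu, huk]; module
  have e2 : yp - yk = vp - vk := by rw [hvp, hvk]; module
  rw [e1, e2]
  -- derive hA
  have EP : 1 / σ * ⟪xk - σ • (yk + g) - xp, xs - xp⟫
      = -(1 / σ * ⟪uk - u, u⟫) - ⟪yk, xs - xp⟫ - ⟪g, xs - xp⟫ := by
    have v1 : xk - σ • (yk + g) - xp = (uk - u) - σ • (yk + g) := by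
      rw [hu, huk]; module
    have v2 : xs - xp = -u := by rw [hu]; module
    rw [v1, v2]
    simp only [inner_neg_right, inner_sub_left, inner_add_right, real_inner_smul_left,
      inner_add_left]
    field_simp
    ring
  rw [EP] at hP
  have G1 : ⟪g, xs - xp⟫ = ⟪g, xs⟫ - ⟪g, xp⟫ := inner_sub_right g xs xp
  have G2 : ⟪g, xs - xk⟫ = ⟪g, xs⟫ - ⟪g, xk⟫ := inner_sub_right g xs xk
  have G3 : ⟪g, xp - xk⟫ = ⟪g, xp⟫ - ⟪g, xk⟫ := inner_sub_right g xp xk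
  have Y1 : ⟪yk, xs - xp⟫ = ⟪xs, yk⟫ - ⟪xp, yk⟫ := by
    rw [inner_sub_right, real_inner_comm yk xs, real_inner_comm yk xp]
  have U1 : ⟪u, vk⟫ = ⟪xp, yk⟫ - ⟪xp, ys⟫ - ⟪xs, yk⟫ + ⟪xs, ys⟫ := by
    rw [hu, hvk]; simp only [inner_sub_left, inner_sub_right]; ring
  have N1 : ‖u - uk‖ ^ 2 = ‖xp - xk‖ ^ 2 := by rw [← e1]
  have hA : 0 ≤ 1 / σ * ⟪uk - u, u⟫ - ⟪u, vk⟫ + L / 2 * ‖u - uk‖ ^ 2 := by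
    rw [N1, U1]
    linarith [hP, hS2, hC, hDe, G1, G2, G3, Y1]
  -- derive hB
  have ED : 1 / τ * ⟪yk + τ • ((2:ℕ) • xp - xk) + e - yp, ys - yp⟫
      = -(1 / τ * ⟪vk - vp, vp⟫) - ⟪(2:ℕ) • xp - xk, vp⟫ - 1 / τ * ⟪e, vp⟫ := by
    have v3 : yk + τ • ((2:ℕ) • xp - xk) + e - yp
        = (vk - vp) + τ • ((2:ℕ) • xp - xk) + e := by
      rw [hvk, hvp]; module
    have v4 : ys - yp = -vp := by rw [hvp]; module
    rw [v3, v4]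
    simp only [inner_neg_right, inner_add_left, real_inner_smul_left]
    field_simp
    ring
  rw [ED] at hD
  have X1 : ⟪(2:ℕ) • xp - xk, vp⟫
      = 2 * ⟪xp, yp⟫ - 2 * ⟪xp, ys⟫ - ⟪xk, yp⟫ + ⟪xk, ys⟫ := by
    rw [hvp]
    simp only [two_smul, inner_sub_left, inner_sub_right, inner_add_left]
    ring
  have X4 : ⟪u, vp⟫ = ⟪xp, yp⟫ - ⟪xp, ys⟫ - ⟪xs, yp⟫ + ⟪xs, ys⟫ := by
    rw [hu, hvp]; simp only [inner_sub_left, inner_sub_right]; ring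
  have X5 : ⟪u - uk, vp⟫ = ⟪xp, yp⟫ - ⟪xp, ys⟫ - ⟪xk, yp⟫ + ⟪xk, ys⟫ := by
    rw [← e1, hvp]; simp only [inner_sub_left, inner_sub_right]; ring
  have hB : 0 ≤ 1 / τ * ⟪vk - vp, vp⟫ + (⟪u, vp⟫ + ⟪u - uk, vp⟫) + 1 / τ * ⟪e, vp⟫ := by
    rw [X4, X5]
    linarith [hD, hS1, X1]
  have key := core_identity' σ τ L (ne_of_gt hσ) (ne_of_gt hτ) u uk vp vk e
  linarith [key, hA, hB]

lemma tendsto_zero_of_normsq' {f : ℕ → E} (h : Tendsto (fun n => ‖f n‖ ^ 2) atTop (𝓝 0)) :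
    Tendsto f atTop (𝓝 0) := by
  rw [tendsto_zero_iff_norm_tendsto_zero]
  have h2 : Tendsto (fun n => Real.sqrt (‖f n‖ ^ 2)) atTop (𝓝 (Real.sqrt 0)) :=
    (Real.continuous_sqrt.tendsto 0).comp h
  have he : (fun n => Real.sqrt (‖f n‖ ^ 2)) = fun n => ‖f n‖ := by
    funext n; exact Real.sqrt_sq (norm_nonneg _)
  rw [he, Real.sqrt_zero] at h2
  exact h2

lemma tendsto_of_normsq' {f : ℕ → E} {a : E}
    (h : Tendsto (fun n => ‖f n - a‖ ^ 2) atTop (𝓝 0)) :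
    Tendsto f atTop (𝓝 a) := by
  have := tendsto_zero_of_normsq' h
  rwa [← tendsto_sub_nhds_zero_iff]

end AuxLemmas2


/-- `(x̂, ŷ)` is a saddle point of the Lagrangian
`L(x, y) = f₁(x) + h(x) + ⟨x, y⟩ − φ(y)`. -/
def IsSaddlePoint {E : Type*} [NormedAddCommGroup E] [InnerProductSpace ℝ E]
    (f₁ h φ : E → ℝ) (p : E × E) : Prop :=
  ∀ x y : E,
    f₁ p.1 + h p.1 + ⟪p.1, y⟫ - φ y ≤ f₁ p.1 + h p.1 + ⟪p.1, p.2⟫ - φ p.2 ∧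
    f₁ p.1 + h p.1 + ⟪p.1, p.2⟫ - φ p.2 ≤ f₁ x + h x + ⟪x, p.2⟫ - φ p.2

theorem stmt_18 {E : Type*} [NormedAddCommGroup E] [InnerProductSpace ℝ E]
    [FiniteDimensional ℝ E]
    (f₁ h φ : E → ℝ) (f₁' : E → E) (L : ℝ) (hL : 0 < L)
    (hf₁conv : ConvexOn ℝ Set.univ f₁)
    (hf₁diff : ∀ x, HasGradientAt f₁ (f₁' x) x)
    (hf₁lip : ∀ x y, ‖f₁' x - f₁' y‖ ≤ L * ‖x - y‖)
    (hhconv : ConvexOn ℝ Set.univ h)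
    (hφconv : ConvexOn ℝ Set.univ φ)
    (σ τ : ℝ) (hσ : 0 < σ) (hτ : 0 < τ) (hcond : σ * τ < 1 - σ * L)
    (ε : ℕ → ℝ) (hεnonneg : ∀ k, 0 ≤ ε k) (hεsum : Summable ε)
    (x y xhat d : ℕ → E)
    (hxhat : ∀ k, ∀ z : E,
      h (xhat (k + 1)) +
          1 / (2 * σ) * ‖xhat (k + 1) - (x k - σ • (y k + f₁' (x k)))‖ ^ 2 ≤
      h z + 1 / (2 * σ) * ‖z - (x k - σ • (y k + f₁' (x k)))‖ ^ 2)
    (hy : ∀ k, ∀ w : E,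
      φ (y (k + 1)) +
          1 / (2 * τ) *
            ‖y (k + 1) - (y k + τ • (2 • xhat (k + 1) - x k)) - d (k + 1)‖ ^ 2 ≤
      φ w + 1 / (2 * τ) * ‖w - (y k + τ • (2 • xhat (k + 1) - x k)) - d (k + 1)‖ ^ 2)
    (hd : ∀ k, ‖d (k + 1)‖ ≤ ε (k + 1) / max 1 ‖y (k + 1)‖)
    (hx : ∀ k, x (k + 1) = xhat (k + 1))
    (hsaddle : ∃ p : E × E, IsSaddlePoint f₁ h φ p) :
    ∃ p : E × E, IsSaddlePoint f₁ h φ p ∧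
      Filter.Tendsto (fun k => (x k, y k)) Filter.atTop (nhds p) := by
  classical
  open Filter Topology in
  have hL0 : (0:ℝ) ≤ L := hL.le
  have h1σL : 0 < 1 - σ * L := (mul_pos hσ hτ).trans hcond
  have hτq : τ < 1 / σ - L := by
    rw [lt_sub_iff_add_lt, lt_div_iff₀ hσ]
    nlinarith
  have hτσ : τ < 1 / σ := hτq.trans_le (sub_le_self _ hL0)
  obtain ⟨δW, hδW, hquadW⟩ := quad_lower' (E := E) hτ hτq
  obtain ⟨δV, hδV, hquadV⟩ := quad_lower' (E := E) hτ hτσ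
  -- the Lyapunov functions
  set V : E × E → ℕ → ℝ := fun p n =>
    1 / (2 * σ) * ‖x n - p.1‖ ^ 2 + 1 / (2 * τ) * ‖y n - p.2‖ ^ 2
      - ⟪x n - p.1, y n - p.2⟫ with hVdef
  set W : ℕ → ℝ := fun k =>
    (1 / σ - L) / 2 * ‖x (k + 1) - x k‖ ^ 2 + 1 / (2 * τ) * ‖y (k + 1) - y k‖ ^ 2
      - ⟪x (k + 1) - x k, y (k + 1) - y k⟫ with hWdef
  -- prox optimality conditions
  have hc2σ : 2 * (1 / (2 * σ)) = 1 / σ := by field_simp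
  have hc2τ : 2 * (1 / (2 * τ)) = 1 / τ := by field_simp
  have P : ∀ k z, h (x (k + 1))
      + 1 / σ * ⟪x k - σ • (y k + f₁' (x k)) - x (k + 1), z - x (k + 1)⟫ ≤ h z := by
    intro k z
    have hm := hxhat k
    rw [← hx k] at hm
    have := prox_subgrad' hhconv (c := 1 / (2 * σ)) (by positivity) hm z
    rwa [hc2σ] at this
  have D : ∀ k w, φ (y (k + 1))
      + 1 / τ * ⟪y k + τ • ((2:ℕ) • x (k + 1) - x k) + d (k + 1) - y (k + 1),
          w - y (k + 1)⟫ ≤ φ w := by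
    intro k w
    have hm := hy k
    rw [← hx k] at hm
    simp only [sub_sub] at hm
    have := prox_subgrad' hφconv (c := 1 / (2 * τ)) (by positivity) hm w
    rwa [hc2τ] at this
  have CVX : ∀ u v : E, f₁ u + ⟪f₁' u, v - u⟫ ≤ f₁ v :=
    grad_convex_ineq' hf₁conv hf₁diff
  have DSC : ∀ u v : E, f₁ v ≤ f₁ u + ⟪f₁' u, v - u⟫ + L / 2 * ‖v - u‖ ^ 2 :=
    descent_lemma' hf₁diff hf₁lip
  -- the key one-step inequality, for an arbitrary saddle point
  have key : ∀ p : E × E, IsSaddlePoint f₁ h φ p → ∀ k,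
      V p (k + 1) + W k ≤ V p k + 1 / τ * ⟪d (k + 1), y (k + 1) - p.2⟫ := by
    intro p hp k
    have hS1 : ⟪p.1, y (k + 1)⟫ - φ (y (k + 1)) ≤ ⟪p.1, p.2⟫ - φ p.2 := by
      have := (hp (x (k + 1)) (y (k + 1))).1; linarith
    have hS2 : f₁ p.1 + h p.1 + ⟪p.1, p.2⟫
        ≤ f₁ (x (k + 1)) + h (x (k + 1)) + ⟪x (k + 1), p.2⟫ := by
      have := (hp (x (k + 1)) (y (k + 1))).2; linarith
    have := onestep' hσ hτ f₁ h φ p.1 p.2 (x k) (x (k + 1)) (y k) (y (k + 1))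
      (f₁' (x k)) (d (k + 1)) (P k p.1) (D k p.2) hS1 hS2 (CVX (x k) p.1)
      (DSC (x k) (x (k + 1)))
    simp only [hVdef, hWdef]
    linarith [this]
  -- error control
  have herr : ∀ (p : E × E) k, 1 / τ * ⟪d (k + 1), y (k + 1) - p.2⟫
      ≤ (1 + ‖p.2‖) / τ * ε (k + 1) := by
    intro p k
    have h1 : ⟪d (k + 1), y (k + 1) - p.2⟫ ≤ ‖d (k + 1)‖ * (‖y (k + 1)‖ + ‖p.2‖) := by
      refine (real_inner_le_norm _ _).trans ?_
      exact mul_le_mul_of_nonneg_left ((norm_sub_le _ _)) (norm_nonneg _)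
    have hM1 : (1:ℝ) ≤ max 1 ‖y (k + 1)‖ := le_max_left _ _
    have hMpos : (0:ℝ) < max 1 ‖y (k + 1)‖ := lt_of_lt_of_le one_pos hM1
    have h2 : ‖d (k + 1)‖ * (‖y (k + 1)‖ + ‖p.2‖)
        ≤ ε (k + 1) / max 1 ‖y (k + 1)‖ * (‖y (k + 1)‖ + ‖p.2‖) :=
      mul_le_mul_of_nonneg_right (hd k) (by positivity)
    have h3 : ε (k + 1) / max 1 ‖y (k + 1)‖ * (‖y (k + 1)‖ + ‖p.2‖)
        ≤ ε (k + 1) * (1 + ‖p.2‖) := by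
      rw [div_mul_eq_mul_div, div_le_iff₀ hMpos]
      have hyM : ‖y (k + 1)‖ ≤ max 1 ‖y (k + 1)‖ := le_max_right _ _
      have hε := hεnonneg (k + 1)
      nlinarith [mul_le_mul_of_nonneg_left hyM hε,
        mul_le_mul_of_nonneg_left hM1 (mul_nonneg hε (norm_nonneg p.2))]
    have h4 : ⟪d (k + 1), y (k + 1) - p.2⟫ ≤ ε (k + 1) * (1 + ‖p.2‖) := by linarith
    have h5 : (0:ℝ) ≤ 1 / τ := by positivity
    have h6 := mul_le_mul_of_nonneg_left h4 h5
    have h7 : 1 / τ * (ε (k + 1) * (1 + ‖p.2‖)) = (1 + ‖p.2‖) / τ * ε (k + 1) := by ring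
    rw [h7] at h6
    exact h6
  -- coefficient conversion
  have hσhalf : (1 / σ) / 2 = 1 / (2 * σ) := by ring
  have hVlow : ∀ (p : E × E) n, δV * (‖x n - p.1‖ ^ 2 + ‖y n - p.2‖ ^ 2) ≤ V p n := by
    intro p n
    have := hquadV (x n - p.1) (y n - p.2)
    rw [hσhalf] at this
    simpa only [hVdef] using this
  have hWlow : ∀ k, δW * (‖x (k + 1) - x k‖ ^ 2 + ‖y (k + 1) - y k‖ ^ 2) ≤ W k := by
    intro k
    have := hquadW (x (k + 1) - x k) (y (k + 1) - y k)
    simpa only [hWdef] using this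
  have hV0 : ∀ (p : E × E) n, 0 ≤ V p n := fun p n =>
    le_trans (mul_nonneg hδV.le (by positivity)) (hVlow p n)
  have hW0 : ∀ k, 0 ≤ W k := fun k =>
    le_trans (mul_nonneg hδW.le (by positivity)) (hWlow k)
  have hεsum' : Summable (fun k => ε (k + 1)) := (summable_nat_add_iff 1).mpr hεsum
  -- quasi-Fejér machinery for any saddle point
  have hQF : ∀ p : E × E, IsSaddlePoint f₁ h φ p →
      (∃ l, Filter.Tendsto (V p) Filter.atTop (nhds l)) ∧ Summable W ∧
        ∀ k, V p k ≤ V p 0 + ∑' j, (1 + ‖p.2‖) / τ * ε (j + 1) := by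
    intro p hp
    refine quasi_fejer' (fun k => hV0 p k) hW0 (fun k => ?_)
      (hεsum'.mul_left _) (fun k => ?_)
    · exact mul_nonneg (by positivity) (hεnonneg _)
    · linarith [key p hp k, herr p k]
  obtain ⟨p₀, hp₀⟩ := hsaddle
  obtain ⟨⟨l₀, hl₀⟩, hWsum, hbound⟩ := hQF p₀ hp₀
  -- successive differences tend to zero
  have hWtend : Filter.Tendsto W Filter.atTop (nhds 0) := hWsum.tendsto_atTop_zero
  have hsumtend : Filter.Tendsto
      (fun k => ‖x (k + 1) - x k‖ ^ 2 + ‖y (k + 1) - y k‖ ^ 2)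
      Filter.atTop (nhds 0) := by
    have hdiv : Filter.Tendsto (fun k => W k / δW) Filter.atTop (nhds (0 / δW)) :=
      hWtend.div_const δW
    rw [zero_div] at hdiv
    refine squeeze_zero (fun k => by positivity) (fun k => ?_) hdiv
    rw [le_div_iff₀ hδW]
    linarith [hWlow k]
  have hΔx2 : Filter.Tendsto (fun k => ‖x (k + 1) - x k‖ ^ 2) Filter.atTop (nhds 0) :=
    squeeze_zero (fun k => sq_nonneg _)
      (fun k => le_add_of_nonneg_right (sq_nonneg _)) hsumtend
  have hΔy2 : Filter.Tendsto (fun k => ‖y (k + 1) - y k‖ ^ 2) Filter.atTop (nhds 0) :=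
    squeeze_zero (fun k => sq_nonneg _)
      (fun k => le_add_of_nonneg_left (sq_nonneg _)) hsumtend
  have hΔx : Filter.Tendsto (fun k => x (k + 1) - x k) Filter.atTop (nhds 0) :=
    tendsto_zero_of_normsq' hΔx2
  have hΔy : Filter.Tendsto (fun k => y (k + 1) - y k) Filter.atTop (nhds 0) :=
    tendsto_zero_of_normsq' hΔy2
  -- boundedness of the iterates
  set C : ℝ := V p₀ 0 + ∑' j, (1 + ‖p₀.2‖) / τ * ε (j + 1) with hCdef
  have hCnn : 0 ≤ C := le_trans (hV0 p₀ 0) (hbound 0)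
  set R : ℝ := Real.sqrt (C / δV) with hRdef
  have hcomp : ∀ n, ‖x n - p₀.1‖ ≤ R ∧ ‖y n - p₀.2‖ ≤ R := by
    intro n
    have hb := (hVlow p₀ n).trans (hbound n)
    constructor
    · have h1 : ‖x n - p₀.1‖ ^ 2 ≤ C / δV := by
        rw [le_div_iff₀ hδV]; nlinarith [sq_nonneg (‖y n - p₀.2‖)]
      calc ‖x n - p₀.1‖ = Real.sqrt (‖x n - p₀.1‖ ^ 2) :=
            (Real.sqrt_sq (norm_nonneg _)).symm
        _ ≤ R := Real.sqrt_le_sqrt h1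
    · have h1 : ‖y n - p₀.2‖ ^ 2 ≤ C / δV := by
        rw [le_div_iff₀ hδV]; nlinarith [sq_nonneg (‖x n - p₀.1‖)]
      calc ‖y n - p₀.2‖ = Real.sqrt (‖y n - p₀.2‖ ^ 2) :=
            (Real.sqrt_sq (norm_nonneg _)).symm
        _ ≤ R := Real.sqrt_le_sqrt h1
  have hbdd : Bornology.IsBounded (Set.range fun k => (x k, y k)) := by
    rw [Metric.isBounded_iff_subset_closedBall (0 : E × E)]
    refine ⟨max (‖p₀.1‖ + R) (‖p₀.2‖ + R), ?_⟩
    rintro _ ⟨k, rfl⟩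
    rw [Metric.mem_closedBall, dist_zero_right, Prod.norm_def]
    have h1 : ‖x k‖ ≤ ‖p₀.1‖ + R := by
      have := (hcomp k).1
      calc ‖x k‖ = ‖(x k - p₀.1) + p₀.1‖ := by rw [sub_add_cancel]
        _ ≤ ‖x k - p₀.1‖ + ‖p₀.1‖ := norm_add_le _ _
        _ ≤ ‖p₀.1‖ + R := by linarith
    have h2 : ‖y k‖ ≤ ‖p₀.2‖ + R := by
      have := (hcomp k).2
      calc ‖y k‖ = ‖(y k - p₀.2) + p₀.2‖ := by rw [sub_add_cancel]
        _ ≤ ‖y k - p₀.2‖ + ‖p₀.2‖ := norm_add_le _ _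
        _ ≤ ‖p₀.2‖ + R := by linarith
    exact max_le_max h1 h2
  -- extract a convergent subsequence
  obtain ⟨c, -, ψ, hψ, hlim⟩ := tendsto_subseq_of_bounded hbdd
    (fun n => Set.mem_range_self n)
  have hψat : Filter.Tendsto ψ Filter.atTop Filter.atTop := hψ.tendsto_atTop
  have hxψ : Filter.Tendsto (fun j => x (ψ j)) Filter.atTop (nhds c.1) := by
    have := (continuous_fst.tendsto c).comp hlim
    simpa [Function.comp_def] using this
  have hyψ : Filter.Tendsto (fun j => y (ψ j)) Filter.atTop (nhds c.2) := by
    have := (continuous_snd.tendsto c).comp hlim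
    simpa [Function.comp_def] using this
  have hxψ1 : Filter.Tendsto (fun j => x (ψ j + 1)) Filter.atTop (nhds c.1) := by
    have hsum := (hΔx.comp hψat).add hxψ
    rw [zero_add] at hsum
    refine hsum.congr (fun j => ?_)
    simp [Function.comp, sub_add_cancel]
  have hyψ1 : Filter.Tendsto (fun j => y (ψ j + 1)) Filter.atTop (nhds c.2) := by
    have hsum := (hΔy.comp hψat).add hyψ
    rw [zero_add] at hsum
    refine hsum.congr (fun j => ?_)
    simp [Function.comp, sub_add_cancel]
  -- d tends to zero
  have hεtend : Filter.Tendsto (fun k => ε (k + 1)) Filter.atTop (nhds 0) :=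
    hεsum'.tendsto_atTop_zero
  have hdtend : Filter.Tendsto (fun k => d (k + 1)) Filter.atTop (nhds 0) := by
    rw [tendsto_zero_iff_norm_tendsto_zero]
    refine squeeze_zero (fun k => norm_nonneg _) (fun k => ?_) hεtend
    exact (hd k).trans (div_le_self (hεnonneg _) (le_max_left _ _))
  have hdψ : Filter.Tendsto (fun j => d (ψ j + 1)) Filter.atTop (nhds 0) :=
    hdtend.comp hψat
  -- continuity facts
  have hf₁'cont : Continuous f₁' := by
    have : LipschitzWith (Real.toNNReal L) f₁' := by
      apply LipschitzWith.of_dist_le_mul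
      intro p q
      rw [dist_eq_norm, dist_eq_norm, Real.coe_toNNReal L hL0]
      exact hf₁lip p q
    exact this.continuous
  have hhcont : Continuous h := continuousOn_univ.mp (hhconv.continuousOn isOpen_univ)
  have hφcont : Continuous φ := continuousOn_univ.mp (hφconv.continuousOn isOpen_univ)
  have hgψ : Filter.Tendsto (fun j => f₁' (x (ψ j))) Filter.atTop (nhds (f₁' c.1)) :=
    (hf₁'cont.tendsto _).comp hxψ
  -- limiting primal optimality condition
  have hsub1 : ∀ z : E, h c.1 - ⟪c.2 + f₁' c.1, z - c.1⟫ ≤ h z := by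
    intro z
    have hlimit : Filter.Tendsto (fun j => h (x (ψ j + 1))
        + 1 / σ * ⟪x (ψ j) - σ • (y (ψ j) + f₁' (x (ψ j))) - x (ψ j + 1),
            z - x (ψ j + 1)⟫) Filter.atTop
        (nhds (h c.1 + 1 / σ * ⟪c.1 - σ • (c.2 + f₁' c.1) - c.1, z - c.1⟫)) := by
      refine Filter.Tendsto.add ((hhcont.tendsto _).comp hxψ1) (Filter.Tendsto.const_mul _ ?_)
      exact Filter.Tendsto.inner
        ((hxψ.sub ((hyψ.add hgψ).const_smul σ)).sub hxψ1)
        (tendsto_const_nhds.sub hxψ1)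
    have hbound1 := le_of_tendsto hlimit
      (Filter.Eventually.of_forall (fun j => P (ψ j) z))
    have e : c.1 - σ • (c.2 + f₁' c.1) - c.1 = -(σ • (c.2 + f₁' c.1)) := by module
    rw [e, inner_neg_left, real_inner_smul_left] at hbound1
    have e2 : 1 / σ * -(σ * ⟪c.2 + f₁' c.1, z - c.1⟫) = -⟪c.2 + f₁' c.1, z - c.1⟫ := by
      field_simp
    rw [e2] at hbound1
    linarith
  -- limiting dual optimality condition
  have hsub2 : ∀ w : E, φ c.2 + ⟪c.1, w - c.2⟫ ≤ φ w := by
    intro w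
    have hlimit : Filter.Tendsto (fun j => φ (y (ψ j + 1))
        + 1 / τ * ⟪y (ψ j) + τ • ((2:ℕ) • x (ψ j + 1) - x (ψ j)) + d (ψ j + 1)
            - y (ψ j + 1), w - y (ψ j + 1)⟫) Filter.atTop
        (nhds (φ c.2 + 1 / τ * ⟪c.2 + τ • ((2:ℕ) • c.1 - c.1) + 0 - c.2, w - c.2⟫)) := by
      refine Filter.Tendsto.add ((hφcont.tendsto _).comp hyψ1) (Filter.Tendsto.const_mul _ ?_)
      refine Filter.Tendsto.inner ?_ (tendsto_const_nhds.sub hyψ1)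
      refine Filter.Tendsto.sub (Filter.Tendsto.add (Filter.Tendsto.add hyψ ?_) hdψ) hyψ1
      exact ((hxψ1.const_smul (2:ℕ)).sub hxψ).const_smul τ
    have hbound2 := le_of_tendsto hlimit
      (Filter.Eventually.of_forall (fun j => D (ψ j) w))
    have e : c.2 + τ • ((2:ℕ) • c.1 - c.1) + 0 - c.2 = τ • c.1 := by
      rw [two_smul ℕ c.1]
      module
    rw [e, real_inner_smul_left] at hbound2
    have e2 : 1 / τ * (τ * ⟪c.1, w - c.2⟫) = ⟪c.1, w - c.2⟫ := by field_simp
    rw [e2] at hbound2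
    linarith
  -- c is a saddle point
  have hcsaddle : IsSaddlePoint f₁ h φ c := by
    intro X Y
    constructor
    · have := hsub2 Y
      rw [inner_sub_right] at this
      linarith
    · have h1 := hsub1 X
      have h2 := CVX c.1 X
      have E1 : ⟪c.2 + f₁' c.1, X - c.1⟫
          = ⟪X, c.2⟫ - ⟪c.1, c.2⟫ + ⟪f₁' c.1, X - c.1⟫ := by
        rw [inner_add_left, inner_sub_right, real_inner_comm c.2 X,
          real_inner_comm c.2 c.1]
      rw [E1] at h1
      linarith
  -- full convergence to c
  obtain ⟨⟨l, hl⟩, -, -⟩ := hQF c hcsaddle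
  have hVψ : Filter.Tendsto (fun j => V c (ψ j)) Filter.atTop (nhds 0) := by
    have hlimit : Filter.Tendsto (fun j =>
        1 / (2 * σ) * ‖x (ψ j) - c.1‖ ^ 2 + 1 / (2 * τ) * ‖y (ψ j) - c.2‖ ^ 2
          - ⟪x (ψ j) - c.1, y (ψ j) - c.2⟫) Filter.atTop
        (nhds (1 / (2 * σ) * ‖c.1 - c.1‖ ^ 2 + 1 / (2 * τ) * ‖c.2 - c.2‖ ^ 2
          - ⟪c.1 - c.1, c.2 - c.2⟫)) := by
      refine Filter.Tendsto.sub (Filter.Tendsto.add ?_ ?_) ?_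
      · exact (((hxψ.sub tendsto_const_nhds).norm).pow 2).const_mul _
      · exact (((hyψ.sub tendsto_const_nhds).norm).pow 2).const_mul _
      · exact Filter.Tendsto.inner (hxψ.sub tendsto_const_nhds)
          (hyψ.sub tendsto_const_nhds)
    simpa only [hVdef, sub_self, norm_zero, inner_zero_left, zero_pow, mul_zero,
      add_zero, sub_zero, ne_eq, OfNat.ofNat_ne_zero, not_false_eq_true] using hlimit
  have hl0 : l = 0 := tendsto_nhds_unique (hl.comp hψat) hVψ
  rw [hl0] at hl
  have hx2 : Filter.Tendsto (fun n => ‖x n - c.1‖ ^ 2) Filter.atTop (nhds 0) := by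
    have hdiv : Filter.Tendsto (fun n => V c n / δV) Filter.atTop (nhds (0 / δV)) :=
      hl.div_const δV
    rw [zero_div] at hdiv
    refine squeeze_zero (fun n => sq_nonneg _) (fun n => ?_) hdiv
    rw [le_div_iff₀ hδV]
    nlinarith [hVlow c n, sq_nonneg (‖y n - c.2‖)]
  have hy2 : Filter.Tendsto (fun n => ‖y n - c.2‖ ^ 2) Filter.atTop (nhds 0) := by
    have hdiv : Filter.Tendsto (fun n => V c n / δV) Filter.atTop (nhds (0 / δV)) :=
      hl.div_const δV
    rw [zero_div] at hdiv
    refine squeeze_zero (fun n => sq_nonneg _) (fun n => ?_) hdiv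
    rw [le_div_iff₀ hδV]
    nlinarith [hVlow c n, sq_nonneg (‖x n - c.1‖)]
  have hxc : Filter.Tendsto x Filter.atTop (nhds c.1) := tendsto_of_normsq' hx2
  have hyc : Filter.Tendsto y Filter.atTop (nhds c.2) := tendsto_of_normsq' hy2
  exact ⟨c, hcsaddle, by simpa using hxc.prodMk_nhds hyc⟩
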